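/- arXiv:1803.08477 — 4 statements merged into one kernel-verified Lean document; each statement's English description precedes it below -/
import Mathlib

section
/- If (F₁,G₁) is a WZ pair, i.e. F₁(n+1,k) - F₁(n,k) = G₁(n,k+1) - G₁(n,k) for all integers n,k ≥ 0 (with k+n in range), then the pair F₂(n,k) = F₁(n,k+n), G₂(n,k) = F₁(n+1,k+n) + G₁(n,k+n) is again a WZ pair: F₂(n+1,k) - F₂(n,k) = G₂(n,k+1) - G₂(n,k). -/
/-- If `(F₁, G₁)` is a WZ pair, then `F₂(n,k) = F₁(n,k+n)`,
`G₂(n,k) = F₁(n+1,k+n) + G₁(n,k+n)` is again a WZ pair. -/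
theorem wz_transform_forward (F₁ G₁ : ℕ → ℕ → ℂ)
    (h : ∀ n k, F₁ (n + 1) k - F₁ n k = G₁ n (k + 1) - G₁ n k)
    (F₂ G₂ : ℕ → ℕ → ℂ)
    (hF₂ : ∀ n k, F₂ n k = F₁ n (k + n))
    (hG₂ : ∀ n k, G₂ n k = F₁ (n + 1) (k + n) + G₁ n (k + n)) :
    ∀ n k, F₂ (n + 1) k - F₂ n k = G₂ n (k + 1) - G₂ n k := by
  intro n k
  have hh := h n (k + n)
  simp only [hF₂, hG₂, show k + (n + 1) = k + n + 1 by ring,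
    show k + 1 + n = k + n + 1 by ring] at *
  linear_combination hh
end

section
/- The pair F(n,k) = (−1)^n 2^{−3n−k} · (1/2 − k)_n (1/2 + k)_n² / ((1)_n² (1+k)_n) · (1/2)_k / (1)_k · 16n² / (2n − 2k − 1) and G(n,k) = (−1)^n 2^{−3n−k} · (1/2 − k)_n (1/2 + k)_n² / ((1)_n² (1+k)_n) · (1/2)_k / (1)_k · (6n + 2k + 1) satisfies the WZ relation F(n+1,k) − F(n,k) = G(n,k+1) − G(n,k) for all nonnegative integers n, k. -/
/-- The rising factorial (Pochhammer symbol) `(x)_n = x(x+1)⋯(x+n-1)`. -/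
def risingFac (x : ℚ) (n : ℕ) : ℚ := ∏ j ∈ Finset.range n, (x + j)

noncomputable def wzF (n k : ℕ) : ℚ :=
  (-1) ^ n / 2 ^ (3 * n + k) *
    (risingFac (1/2 - k) n * risingFac (1/2 + k) n ^ 2 /
      (risingFac 1 n ^ 2 * risingFac (1 + k) n)) *
    (risingFac (1/2) k / risingFac 1 k) *
    (16 * n ^ 2 / (2 * (n : ℚ) - 2 * k - 1))

noncomputable def wzG (n k : ℕ) : ℚ :=
  (-1) ^ n / 2 ^ (3 * n + k) *
    (risingFac (1/2 - k) n * risingFac (1/2 + k) n ^ 2 /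
      (risingFac 1 n ^ 2 * risingFac (1 + k) n)) *
    (risingFac (1/2) k / risingFac 1 k) *
    (6 * n + 2 * k + 1)

lemma risingFac_succ (x : ℚ) (n : ℕ) :
    risingFac x (n + 1) = risingFac x n * (x + n) := by
  simp [risingFac, Finset.prod_range_succ]

lemma risingFac_shift (x : ℚ) (n : ℕ) :
    x * risingFac (x + 1) n = risingFac x n * (x + n) := by
  induction n with
  | zero => simp [risingFac]
  | succ m ih =>
    rw [risingFac_succ, risingFac_succ]
    push_cast
    linear_combination (x + 1 + (m:ℚ)) * ih

lemma risingFac_add_one (x : ℚ) (n : ℕ) (hx : x ≠ 0) :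
    risingFac (x + 1) n = risingFac x n * (x + n) / x := by
  field_simp
  rw [mul_comm]
  linear_combination risingFac_shift x n

lemma risingFac_sub_one (x : ℚ) (n : ℕ) (h : x + n - 1 ≠ 0) :
    risingFac (x - 1) n = (x - 1) * risingFac x n / (x + n - 1) := by
  have := risingFac_shift (x - 1) n
  rw [sub_add_cancel] at this
  field_simp
  linear_combination -this

lemma risingFac_half_ne (y : ℤ) (n : ℕ) : risingFac ((y : ℚ) + 1/2) n ≠ 0 := by
  rw [risingFac, Finset.prod_ne_zero_iff]
  intro j _ h
  have h2 : (2 * y + 2 * j + 1 : ℚ) = 0 := by push_cast; linarith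
  have h3 : (2 * y + 2 * (j : ℤ) + 1 : ℤ) = 0 := by exact_mod_cast h2
  omega

lemma risingFac_pos_ne (x : ℚ) (n : ℕ) (hx : 0 < x) : risingFac x n ≠ 0 := by
  rw [risingFac, Finset.prod_ne_zero_iff]
  intro j _
  positivity

set_option maxHeartbeats 1000000 in
/-- The pair 3.2 of Guillera's thesis satisfies the WZ relation. -/
theorem wz_pair_3_2 :
    ∀ n k : ℕ, wzF (n + 1) k - wzF n k = wzG n (k + 1) - wzG n k := by
  intro n k
  have ha : risingFac (1/2 - (k:ℚ)) n ≠ 0 := by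
    rw [show (1/2 - (k:ℚ)) = ((-(k:ℤ)):ℚ) + 1/2 by push_cast; ring]
    exact risingFac_half_ne _ n
  have hb : risingFac (1/2 + (k:ℚ)) n ≠ 0 := by
    rw [show (1/2 + (k:ℚ)) = ((k:ℤ):ℚ) + 1/2 by push_cast; ring]
    exact risingFac_half_ne _ n
  have hc : risingFac 1 n ≠ 0 := risingFac_pos_ne 1 n one_pos
  have hd : risingFac (1 + (k:ℚ)) n ≠ 0 := risingFac_pos_ne (1 + (k:ℚ)) n (by positivity)
  have he : risingFac (1/2) k ≠ 0 := by
    rw [show (1/2 : ℚ) = ((0:ℤ):ℚ) + 1/2 by norm_num]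
    exact risingFac_half_ne 0 k
  have hf : risingFac 1 k ≠ 0 := risingFac_pos_ne 1 k one_pos
  have hk2 : (1/2 : ℚ) + k ≠ 0 := by positivity
  have hk1 : (1 : ℚ) + k ≠ 0 := by positivity
  have hden1 : (2 * (n:ℚ) - 2 * k - 1) ≠ 0 := by
    intro h
    have h3 : (2 * (n:ℤ) - 2 * k - 1 : ℤ) = 0 := by exact_mod_cast h
    omega
  have hden2 : (2 * ((n:ℚ)+1) - 2 * k - 1) ≠ 0 := by
    intro h
    have h3 : (2 * ((n:ℤ)+1) - 2 * k - 1 : ℤ) = 0 := by exact_mod_cast h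
    omega
  have hden3 : ((1/2 : ℚ) - k + n - 1) ≠ 0 := by
    intro h
    exact hden1 (by linarith)
  have hn1 : (1 : ℚ) + n ≠ 0 := by positivity
  have hkn : (1 : ℚ) + k + n ≠ 0 := by positivity
  have ea : risingFac (1/2 - (k:ℚ)) (n+1) = risingFac (1/2 - (k:ℚ)) n * ((1/2 - k) + n) :=
    risingFac_succ _ n
  have eb : risingFac (1/2 + (k:ℚ)) (n+1) = risingFac (1/2 + (k:ℚ)) n * ((1/2 + k) + n) :=
    risingFac_succ _ n
  have ec : risingFac 1 (n+1) = risingFac 1 n * (1 + n) := risingFac_succ _ n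
  have ed : risingFac (1 + (k:ℚ)) (n+1) = risingFac (1 + (k:ℚ)) n * ((1 + k) + n) :=
    risingFac_succ _ n
  have ea' : risingFac (1/2 - ((k:ℚ)+1)) n
      = (1/2 - (k:ℚ) - 1) * risingFac (1/2 - (k:ℚ)) n / ((1/2 - (k:ℚ)) + n - 1) := by
    rw [show (1/2 - ((k:ℚ)+1)) = (1/2 - (k:ℚ)) - 1 by ring]
    exact risingFac_sub_one _ n (by convert hden3 using 2)
  have eb' : risingFac (1/2 + ((k:ℚ)+1)) n
      = risingFac (1/2 + (k:ℚ)) n * ((1/2 + k) + n) / (1/2 + k) := by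
    rw [show (1/2 + ((k:ℚ)+1)) = (1/2 + (k:ℚ)) + 1 by ring]
    exact risingFac_add_one _ n hk2
  have ed' : risingFac (1 + ((k:ℚ)+1)) n
      = risingFac (1 + (k:ℚ)) n * ((1 + k) + n) / (1 + k) := by
    rw [show (1 + ((k:ℚ)+1)) = (1 + (k:ℚ)) + 1 by ring]
    exact risingFac_add_one _ n hk1
  have ee' : risingFac (1/2) (k+1) = risingFac (1/2) k * (1/2 + k) := risingFac_succ _ k
  have ef' : risingFac 1 (k+1) = risingFac 1 k * (1 + k) := risingFac_succ _ k
  set T : ℚ := (-1) ^ n / 2 ^ (3 * n + k) *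
    (risingFac (1/2 - (k:ℚ)) n * risingFac (1/2 + (k:ℚ)) n ^ 2 /
      (risingFac 1 n ^ 2 * risingFac (1 + (k:ℚ)) n)) *
    (risingFac (1/2) k / risingFac 1 k) with hT
  have hF0 : wzF n k = T * (16 * (n:ℚ) ^ 2 / (2 * (n:ℚ) - 2 * k - 1)) := by
    rw [wzF, hT]
  have hG0 : wzG n k = T * (6 * (n:ℚ) + 2 * k + 1) := by
    rw [wzG, hT]
  have hF1 : wzF (n+1) k = T *
      (-(2 * (n:ℚ) + 2 * k + 1) ^ 2 / (4 * (1 + (k:ℚ) + n))) := by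
    rw [wzF, hT]
    push_cast
    rw [ea, eb, ec, ed, show 3 * (n+1) + k = 3*n+k + 3 by ring, pow_add, pow_succ]
    have hden2' : 2 * ((n:ℚ) + 1 - k) - 1 ≠ 0 := by convert hden2 using 1; ring
    field_simp [hden2', ha, hb, hc, hd, he, hf, hn1, hkn, hk1, hk2, hden1, hden2, hden3]
    ring
  have h2k1 : (2 * (k:ℚ) + 1) ≠ 0 := fun h => hk2 (by linarith)
  have hG1a : wzG n (k+1) = T *
      ((1/2) * ((1/2 - (k:ℚ) - 1) / ((1/2 - (k:ℚ)) + n - 1)) *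
        ((((1/2 + (k:ℚ)) + n) / (1/2 + k)) ^ 2) * ((1 + (k:ℚ)) / ((1 + k) + n)) *
        ((1/2 + (k:ℚ)) / (1 + k)) *
        (6 * (n:ℚ) + 2 * (k+1) + 1)) := by
    rw [wzG, hT]
    push_cast
    rw [ea', eb', ed', ee', ef', show 3*n + (k+1) = 3*n+k + 1 by ring, pow_add]
    field_simp [ha, hb, hc, hd, he, hf, hn1, hkn, hk1, hk2, hden1, hden2, hden3]
  have hG1b : T * ((1/2) * ((1/2 - (k:ℚ) - 1) / ((1/2 - (k:ℚ)) + n - 1)) *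
        ((((1/2 + (k:ℚ)) + n) / (1/2 + k)) ^ 2) * ((1 + (k:ℚ)) / ((1 + k) + n)) *
        ((1/2 + (k:ℚ)) / (1 + k)) *
        (6 * (n:ℚ) + 2 * (k+1) + 1))
      = T * (-(2 * (n:ℚ) + 2 * k + 1) ^ 2 * (6 * (n:ℚ) + 2 * k + 3) /
        ((4 * (1 + (k:ℚ) + n)) * (2 * (n:ℚ) - 2 * k - 1))) := by
    have f1 : ((1/2 : ℚ) - (k:ℚ) - 1) / ((1/2 - (k:ℚ)) + n - 1)
        = (-(2 * (k:ℚ) + 1)) / (2 * (n:ℚ) - 2 * k - 1) := by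
      rw [div_eq_div_iff (by convert hden3 using 1) hden1]; ring
    have f2 : ((1/2 + (k:ℚ)) + n) / (1/2 + (k:ℚ))
        = (2 * (n:ℚ) + 2 * k + 1) / (2 * (k:ℚ) + 1) := by
      rw [div_eq_div_iff hk2 h2k1]; ring
    have f4 : (1/2 + (k:ℚ)) / (1 + (k:ℚ)) = (2 * (k:ℚ) + 1) / (2 * (1 + (k:ℚ))) := by
      rw [div_eq_div_iff hk1 (by exact mul_ne_zero two_ne_zero hk1)]; ring
    rw [f1, f2, f4]
    field_simp [h2k1, hk1, hden1, hkn]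
    ring
  have hG1 := hG1a.trans hG1b
  have key : (-(2 * (n:ℚ) + 2 * k + 1) ^ 2 / (4 * (1 + (k:ℚ) + n)))
      - (16 * (n:ℚ) ^ 2 / (2 * (n:ℚ) - 2 * k - 1))
      = (-(2 * (n:ℚ) + 2 * k + 1) ^ 2 * (6 * (n:ℚ) + 2 * k + 3) /
          ((4 * (1 + (k:ℚ) + n)) * (2 * (n:ℚ) - 2 * k - 1)))
        - (6 * (n:ℚ) + 2 * k + 1) := by
    have hden1' : 2 * ((n:ℚ) - k) - 1 ≠ 0 := by convert hden1 using 1; ring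
    field_simp [hden1', hden1, hkn]
    ring
  rw [hF1, hF0, hG1, hG0]
  linear_combination T * key
end

section
/- Define F(n,k) = (−1)^{n+k} q^{(n+k)(3n−k)} (q;q²)_{n−k−1} (q;q²)_{n+k}² / ((q⁴;q⁴)_{n−1}² (q⁴;q⁴)_{n+k}) · 1/(1−q) and G(n,k) = (−1)^{n+k} q^{(n+k)(3n−k)} (q;q²)_{n−k} (q;q²)_{n+k}² / ((q⁴;q⁴)_n² (q⁴;q⁴)_{n+k}) · [6n+2k+1]_q, where [m]_q = (1−q^m)/(1−q). Then (F,G) is a q-WZ pair: F(n+1,k) − F(n,k) = G(n,k+1) − G(n,k) for all nonnegative integers n, k with n ≥ k + 1 (and F(0,k) = 0 with the convention that (q⁴;q⁴)_{−1}² in the denominator makes F(0,k) vanish). -/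
/-- The q-Pochhammer symbol `(a; p)_m = ∏_{j=0}^{m-1} (1 - a p^j)`, extended to
negative integer indices by `(a; p)_{-n} = (∏_{j=1}^{n} (1 - a p^{-j}))⁻¹`. -/
noncomputable def qPochZ (a p : ℝ) (m : ℤ) : ℝ :=
  if 0 ≤ m then ∏ j ∈ Finset.range m.toNat, (1 - a * p ^ j)
  else (∏ j ∈ Finset.range (-m).toNat, (1 - a * p ^ (-(j : ℤ) - 1)))⁻¹

/-- `[m]_q = (1 - q^m)/(1 - q)`. -/
noncomputable def qBracket (q : ℝ) (m : ℕ) : ℝ := (1 - q ^ m) / (1 - q)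

noncomputable def guoF (q : ℝ) (n k : ℕ) : ℝ :=
  if n = 0 then 0 else
    (-1) ^ (n + k) * q ^ (((n : ℤ) + k) * (3 * n - k)) *
      (qPochZ q (q ^ 2) ((n : ℤ) - k - 1) * qPochZ q (q ^ 2) ((n : ℤ) + k) ^ 2 /
        (qPochZ (q ^ 4) (q ^ 4) ((n : ℤ) - 1) ^ 2 * qPochZ (q ^ 4) (q ^ 4) ((n : ℤ) + k))) *
      (1 / (1 - q))

noncomputable def guoG (q : ℝ) (n k : ℕ) : ℝ :=
  (-1) ^ (n + k) * q ^ (((n : ℤ) + k) * (3 * n - k)) *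
    (qPochZ q (q ^ 2) ((n : ℤ) - k) * qPochZ q (q ^ 2) ((n : ℤ) + k) ^ 2 /
      (qPochZ (q ^ 4) (q ^ 4) (n : ℤ) ^ 2 * qPochZ (q ^ 4) (q ^ 4) ((n : ℤ) + k))) *
    qBracket q (6 * n + 2 * k + 1)

/-- Auxiliary: nat-indexed odd-power q-Pochhammer `(q; q²)_m`. -/
noncomputable def guoPq (q : ℝ) (m : ℕ) : ℝ := ∏ j ∈ Finset.range m, (1 - q ^ (2 * j + 1))

/-- Auxiliary: nat-indexed `(q⁴; q⁴)_m`. -/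
noncomputable def guoQ4 (q : ℝ) (m : ℕ) : ℝ := ∏ j ∈ Finset.range m, (1 - q ^ (4 * j + 4))

lemma guoPq_succ (q : ℝ) (m : ℕ) :
    guoPq q (m + 1) = guoPq q m * (1 - q ^ (2 * m + 1)) :=
  Finset.prod_range_succ _ _

lemma guoQ4_succ (q : ℝ) (m : ℕ) :
    guoQ4 q (m + 1) = guoQ4 q m * (1 - q ^ (4 * m + 4)) :=
  Finset.prod_range_succ _ _

lemma qPochZ_q_nat (q : ℝ) (m : ℕ) : qPochZ q (q ^ 2) (m : ℤ) = guoPq q m := by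
  unfold qPochZ guoPq
  rw [if_pos (Int.natCast_nonneg m), Int.toNat_natCast]
  refine Finset.prod_congr rfl fun j _ => ?_
  rw [← pow_mul, pow_succ, mul_comm]

lemma qPochZ_q4_nat (q : ℝ) (m : ℕ) : qPochZ (q ^ 4) (q ^ 4) (m : ℤ) = guoQ4 q m := by
  unfold qPochZ guoQ4
  rw [if_pos (Int.natCast_nonneg m), Int.toNat_natCast]
  refine Finset.prod_congr rfl fun j _ => ?_
  rw [← pow_mul, ← pow_add]
  ring_nf

lemma guo_one_sub_pow_pos (q : ℝ) (hq0 : 0 < q) (hq1 : q < 1) (m : ℕ) (hm : m ≠ 0) :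
    0 < 1 - q ^ m := by
  have := pow_lt_one₀ hq0.le hq1 hm
  linarith

lemma guoPq_pos (q : ℝ) (hq0 : 0 < q) (hq1 : q < 1) (m : ℕ) : 0 < guoPq q m :=
  Finset.prod_pos fun j _ => guo_one_sub_pow_pos q hq0 hq1 _ (by omega)

lemma guoQ4_pos (q : ℝ) (hq0 : 0 < q) (hq1 : q < 1) (m : ℕ) : 0 < guoQ4 q m :=
  Finset.prod_pos fun j _ => guo_one_sub_pow_pos q hq0 hq1 _ (by omega)

/-- The Guo–Liu q-WZ pair satisfies the q-WZ relation for `n ≥ k + 1`,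
and `F(0,k) = 0`. -/
theorem guo_liu_qWZ_pair (q : ℝ) (hq0 : 0 < q) (hq1 : q < 1) :
    (∀ n k : ℕ, k + 1 ≤ n →
      guoF q (n + 1) k - guoF q n k = guoG q n (k + 1) - guoG q n k) ∧
    (∀ k : ℕ, guoF q 0 k = 0) := by
  constructor
  · intro n k hk
    obtain ⟨d, rfl⟩ : ∃ d, n = k + 1 + d := ⟨n - (k + 1), by omega⟩
    have hne : ∀ m : ℕ, m ≠ 0 → (1 : ℝ) - q ^ m ≠ 0 :=
      fun m hm => ne_of_gt (guo_one_sub_pow_pos q hq0 hq1 m hm)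
    have h1q : (1 : ℝ) - q ≠ 0 := ne_of_gt (by linarith)
    have hs : ∀ m : ℕ, ((-1 : ℝ)) ^ (2 * k + m) = (-1) ^ m := fun m => by
      rw [pow_add, pow_mul]; norm_num
    -- evaluate the four terms
    have cF : guoF q (k + 1 + d) k =
        (-1) ^ (d + 1) * q ^ ((d + 2 * k + 1) * (3 * d + 2 * k + 3)) *
          (guoPq q d * guoPq q (d + 2 * k + 1) ^ 2 /
            (guoQ4 q (d + k) ^ 2 * guoQ4 q (d + 2 * k + 1))) * (1 / (1 - q)) := by
      rw [guoF, if_neg (by omega)]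
      have a4 : (((k + 1 + d : ℕ) : ℤ) + (k : ℕ)) * (3 * ((k + 1 + d : ℕ) : ℤ) - (k : ℕ))
          = (((d + 2 * k + 1) * (3 * d + 2 * k + 3) : ℕ) : ℤ) := by push_cast; ring
      have a1 : ((k + 1 + d : ℕ) : ℤ) - (k : ℕ) - 1 = ((d : ℕ) : ℤ) := by push_cast; ring
      have a2 : ((k + 1 + d : ℕ) : ℤ) + (k : ℕ) = ((d + 2 * k + 1 : ℕ) : ℤ) := by
        push_cast; ring
      have a3 : ((k + 1 + d : ℕ) : ℤ) - 1 = ((d + k : ℕ) : ℤ) := by push_cast; ring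
      rw [a4, a1, a2, a3, qPochZ_q_nat, qPochZ_q_nat, qPochZ_q4_nat, qPochZ_q4_nat,
        zpow_natCast, show k + 1 + d + k = 2 * k + (d + 1) from by ring, hs]
    have cF1 : guoF q (k + 1 + d + 1) k =
        (-1) ^ (d + 2) * q ^ ((d + 2 * k + 2) * (3 * d + 2 * k + 6)) *
          (guoPq q (d + 1) * guoPq q (d + 2 * k + 1 + 1) ^ 2 /
            (guoQ4 q (d + k + 1) ^ 2 * guoQ4 q (d + 2 * k + 1 + 1))) * (1 / (1 - q)) := by
      rw [guoF, if_neg (by omega)]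
      have a4 : (((k + 1 + d + 1 : ℕ) : ℤ) + (k : ℕ)) *
            (3 * ((k + 1 + d + 1 : ℕ) : ℤ) - (k : ℕ))
          = (((d + 2 * k + 2) * (3 * d + 2 * k + 6) : ℕ) : ℤ) := by push_cast; ring
      have a1 : ((k + 1 + d + 1 : ℕ) : ℤ) - (k : ℕ) - 1 = ((d + 1 : ℕ) : ℤ) := by
        push_cast; ring
      have a2 : ((k + 1 + d + 1 : ℕ) : ℤ) + (k : ℕ) = ((d + 2 * k + 1 + 1 : ℕ) : ℤ) := by
        push_cast; ring
      have a3 : ((k + 1 + d + 1 : ℕ) : ℤ) - 1 = ((d + k + 1 : ℕ) : ℤ) := by push_cast; ring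
      rw [a4, a1, a2, a3, qPochZ_q_nat, qPochZ_q_nat, qPochZ_q4_nat, qPochZ_q4_nat,
        zpow_natCast, show k + 1 + d + 1 + k = 2 * k + (d + 2) from by ring, hs]
    have cG : guoG q (k + 1 + d) k =
        (-1) ^ (d + 1) * q ^ ((d + 2 * k + 1) * (3 * d + 2 * k + 3)) *
          (guoPq q (d + 1) * guoPq q (d + 2 * k + 1) ^ 2 /
            (guoQ4 q (d + k + 1) ^ 2 * guoQ4 q (d + 2 * k + 1))) *
          ((1 - q ^ (6 * d + 8 * k + 7)) / (1 - q)) := by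
      rw [guoG, qBracket]
      have a4 : (((k + 1 + d : ℕ) : ℤ) + (k : ℕ)) * (3 * ((k + 1 + d : ℕ) : ℤ) - (k : ℕ))
          = (((d + 2 * k + 1) * (3 * d + 2 * k + 3) : ℕ) : ℤ) := by push_cast; ring
      have a1 : ((k + 1 + d : ℕ) : ℤ) - (k : ℕ) = ((d + 1 : ℕ) : ℤ) := by push_cast; ring
      have a2 : ((k + 1 + d : ℕ) : ℤ) + (k : ℕ) = ((d + 2 * k + 1 : ℕ) : ℤ) := by
        push_cast; ring
      have a3 : ((k + 1 + d : ℕ) : ℤ) = ((d + k + 1 : ℕ) : ℤ) := by push_cast; ring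
      have a5 : 6 * (k + 1 + d) + 2 * k + 1 = 6 * d + 8 * k + 7 := by omega
      rw [a4, a1, a2, a3, a5, qPochZ_q_nat, qPochZ_q_nat, qPochZ_q4_nat, qPochZ_q4_nat,
        zpow_natCast, show k + 1 + d + k = 2 * k + (d + 1) from by ring, hs]
    have cG1 : guoG q (k + 1 + d) (k + 1) =
        (-1) ^ (d + 2) * q ^ ((d + 2 * k + 2) * (3 * d + 2 * k + 2)) *
          (guoPq q d * guoPq q (d + 2 * k + 1 + 1) ^ 2 /
            (guoQ4 q (d + k + 1) ^ 2 * guoQ4 q (d + 2 * k + 1 + 1))) *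
          ((1 - q ^ (6 * d + 8 * k + 9)) / (1 - q)) := by
      rw [guoG, qBracket]
      have a4 : (((k + 1 + d : ℕ) : ℤ) + ((k + 1 : ℕ) : ℤ)) *
            (3 * ((k + 1 + d : ℕ) : ℤ) - ((k + 1 : ℕ) : ℤ))
          = (((d + 2 * k + 2) * (3 * d + 2 * k + 2) : ℕ) : ℤ) := by push_cast; ring
      have a1 : ((k + 1 + d : ℕ) : ℤ) - ((k + 1 : ℕ) : ℤ) = ((d : ℕ) : ℤ) := by
        push_cast; ring
      have a2 : ((k + 1 + d : ℕ) : ℤ) + ((k + 1 : ℕ) : ℤ) = ((d + 2 * k + 1 + 1 : ℕ) : ℤ) := by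
        push_cast; ring
      have a3 : ((k + 1 + d : ℕ) : ℤ) = ((d + k + 1 : ℕ) : ℤ) := by push_cast; ring
      have a5 : 6 * (k + 1 + d) + 2 * (k + 1) + 1 = 6 * d + 8 * k + 9 := by omega
      rw [a4, a1, a2, a3, a5, qPochZ_q_nat, qPochZ_q_nat, qPochZ_q4_nat, qPochZ_q4_nat,
        zpow_natCast, show k + 1 + d + (k + 1) = 2 * k + (d + 2) from by ring, hs]
    rw [cF, cF1, cG, cG1, guoPq_succ q d, guoPq_succ q (d + 2 * k + 1),
      guoQ4_succ q (d + k), guoQ4_succ q (d + 2 * k + 1)]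
    have hP1 : guoPq q d ≠ 0 := ne_of_gt (guoPq_pos q hq0 hq1 d)
    have hP2 : guoPq q (d + 2 * k + 1) ≠ 0 := ne_of_gt (guoPq_pos q hq0 hq1 _)
    have hC : guoQ4 q (d + k) ≠ 0 := ne_of_gt (guoQ4_pos q hq0 hq1 _)
    have hD : guoQ4 q (d + 2 * k + 1) ≠ 0 := ne_of_gt (guoQ4_pos q hq0 hq1 _)
    have h1 : (1 : ℝ) - q ^ (2 * d + 1) ≠ 0 := hne _ (by omega)
    have h2 : (1 : ℝ) - q ^ (2 * (d + 2 * k + 1) + 1) ≠ 0 := hne _ (by omega)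
    have h3 : (1 : ℝ) - q ^ (4 * (d + k) + 4) ≠ 0 := hne _ (by omega)
    have h4 : (1 : ℝ) - q ^ (4 * (d + 2 * k + 1) + 4) ≠ 0 := hne _ (by omega)
    field_simp
    ring
  · intro k
    simp [guoF]
end

section
/- The pair F(n,k) = 18(−1)^k (1/2)_{n+k}² (1/2)_{2n−k−1} (1/2)_k / ((1)_{n−1}² (1)_{2n+2k}) · 3^k / 9^n and G(n,k) = (−1)^k (1/2)_{n+k}² (1/2)_{2n−k} (1/2)_k / ((1)_n² (1)_{2n+2k}) · 3^k / 9^n · (8n+2k+1) satisfies the WZ relation F(n+1,k) − F(n,k) = G(n,k+1) − G(n,k) for all nonnegative integers n and k (with the convention that (1)_{n−1} for n = 0 makes F(0,k) = 0, i.e. F(0,k) is defined to be 0). -/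
/-- The rising factorial `(x)_m` extended to integer indices:
`(x)_m = x(x+1)⋯(x+m-1)` for `m ≥ 0` and `(x)_{-n} = ((x-1)(x-2)⋯(x-n))⁻¹`. -/
noncomputable def risingZ (x : ℚ) (m : ℤ) : ℚ :=
  if 0 ≤ m then ∏ j ∈ Finset.range m.toNat, (x + j)
  else (∏ j ∈ Finset.range (-m).toNat, (x - 1 - j))⁻¹

noncomputable def wzF7 (n k : ℕ) : ℚ :=
  if n = 0 then 0 else
    18 * (-1) ^ k *
      (risingZ (1/2) ((n : ℤ) + k) ^ 2 * risingZ (1/2) (2 * (n : ℤ) - k - 1) *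
        risingZ (1/2) (k : ℤ) /
        (risingZ 1 ((n : ℤ) - 1) ^ 2 * risingZ 1 (2 * (n : ℤ) + 2 * k))) *
      (3 ^ k / 9 ^ n)

noncomputable def wzG7 (n k : ℕ) : ℚ :=
  (-1) ^ k *
    (risingZ (1/2) ((n : ℤ) + k) ^ 2 * risingZ (1/2) (2 * (n : ℤ) - k) *
      risingZ (1/2) (k : ℤ) /
      (risingZ 1 (n : ℤ) ^ 2 * risingZ 1 (2 * (n : ℤ) + 2 * k))) *
    (3 ^ k / 9 ^ n) * (8 * n + 2 * k + 1)

lemma risingZ_succ (x : ℚ) (m : ℤ) (h : x + m ≠ 0) :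
    risingZ x (m + 1) = risingZ x m * (x + m) := by
  unfold risingZ
  rcases le_or_gt 0 m with hm | hm
  · rw [if_pos (by omega), if_pos hm]
    rw [show (m+1).toNat = m.toNat + 1 by omega, Finset.prod_range_succ]
    congr 2
    exact_mod_cast congrArg (Int.cast : ℤ → ℚ) (Int.toNat_of_nonneg hm)
  · rcases eq_or_lt_of_le (show m ≤ -1 by omega) with he | hlt
    · rw [if_pos (by omega), if_neg (by omega)]
      rw [show (-m).toNat = 1 by omega]
      subst he
      simp only [Int.toNat_one, Finset.prod_range_one]
      push_cast at h ⊢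
      rw [show x - 1 - 0 = x + -1 by ring]
      field_simp
      simp
    · rw [if_neg (by omega), if_neg (by omega)]
      rw [show (-m).toNat = (-(m+1)).toNat + 1 by omega, Finset.prod_range_succ]
      have hc : (x - 1 - ((-(m+1)).toNat : ℚ)) = x + m := by
        have : (((-(m+1)).toNat : ℤ) : ℚ) = ((-(m+1) : ℤ) : ℚ) :=
          congrArg _ (Int.toNat_of_nonneg (by omega))
        push_cast at this ⊢
        rw [this]; ring
      rw [hc, mul_inv, inv_mul_cancel_right₀ h]

lemma risingZ_shift (x : ℚ) (p q : ℤ) (hpq : p = q + 1) (h : x + q ≠ 0) :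
    risingZ x p = risingZ x q * (x + q) := by subst hpq; exact risingZ_succ x q h

lemma half_add_int_ne (z : ℤ) : (1/2 : ℚ) + z ≠ 0 := by
  intro h
  have h2 : ((2*z+1 : ℤ) : ℚ) = 0 := by push_cast; linarith
  have := Int.cast_injective (α := ℚ) (by simpa using h2 : ((2*z+1 : ℤ) : ℚ) = ((0:ℤ):ℚ))
  omega

lemma risingZ_half_ne_zero (m : ℤ) : risingZ (1/2 : ℚ) m ≠ 0 := by
  unfold risingZ
  split
  · refine Finset.prod_ne_zero_iff.2 fun j _ => ?_
    positivity
  · refine inv_ne_zero (Finset.prod_ne_zero_iff.2 fun j _ => ?_)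
    have : (0:ℚ) ≤ j := Nat.cast_nonneg j
    intro hc; nlinarith

lemma risingZ_one_ne_zero (q : ℤ) (hq : 0 ≤ q) : risingZ 1 q ≠ 0 := by
  unfold risingZ
  rw [if_pos hq]
  refine Finset.prod_ne_zero_iff.2 fun j _ => ?_
  positivity

lemma risingZ_zero (x : ℚ) : risingZ x 0 = 1 := by simp [risingZ]

set_option maxHeartbeats 2000000 in
/-- WZ pair 7 of Guillera's thesis satisfies the WZ relation. -/
theorem wz_pair_7 :
    ∀ n k : ℕ, wzF7 (n + 1) k - wzF7 n k = wzG7 n (k + 1) - wzG7 n k := by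
  intro n k
  rcases n with _ | m
  · simp only [wzF7, wzG7, if_neg (Nat.succ_ne_zero 0), if_pos rfl]
    push_cast
    ring_nf
    rw [risingZ_zero,
        risingZ_shift (1/2) (1+(k:ℤ)) (k:ℤ) (by ring) (half_add_int_ne _),
        risingZ_shift (1/2) (1-(k:ℤ)) (-(k:ℤ)) (by ring) (half_add_int_ne _),
        risingZ_shift (1/2) (-(k:ℤ)) (-1-(k:ℤ)) (by ring) (half_add_int_ne _),
        risingZ_shift 1 (2+(k:ℤ)*2) (1+(k:ℤ)*2) (by ring) (by positivity),
        risingZ_shift 1 (1+(k:ℤ)*2) ((k:ℤ)*2) (by ring) (by positivity)]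
    have hb := risingZ_half_ne_zero (-1-(k:ℤ))
    have hc := risingZ_half_ne_zero ((k:ℤ))
    have he := risingZ_one_ne_zero ((k:ℤ)*2) (by positivity)
    have h1 := half_add_int_ne ((k:ℤ))
    have h2 := half_add_int_ne (-(k:ℤ))
    have h3 := half_add_int_ne (-1-(k:ℤ))
    push_cast at *
    field_simp
    ring
  · simp only [wzF7, wzG7, if_neg (Nat.succ_ne_zero _)]
    push_cast
    ring_nf
    rw [risingZ_shift (1/2) (2+(m:ℤ)+(k:ℤ)) (1+(m:ℤ)+(k:ℤ)) (by ring) (half_add_int_ne _),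
        risingZ_shift (1/2) (3+(m:ℤ)*2-(k:ℤ)) (2+(m:ℤ)*2-(k:ℤ)) (by ring) (half_add_int_ne _),
        risingZ_shift (1/2) (2+(m:ℤ)*2-(k:ℤ)) (1+(m:ℤ)*2-(k:ℤ)) (by ring) (half_add_int_ne _),
        risingZ_shift (1/2) (1+(k:ℤ)) (k:ℤ) (by ring) (half_add_int_ne _),
        risingZ_shift 1 (1+(m:ℤ)) (m:ℤ) (by ring) (by positivity),
        risingZ_shift 1 (4+(m:ℤ)*2+(k:ℤ)*2) (3+(m:ℤ)*2+(k:ℤ)*2) (by ring) (by positivity),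
        risingZ_shift 1 (3+(m:ℤ)*2+(k:ℤ)*2) (2+(m:ℤ)*2+(k:ℤ)*2) (by ring) (by positivity)]
    have ha := risingZ_half_ne_zero (1+(m:ℤ)+(k:ℤ))
    have hb := risingZ_half_ne_zero (1+(m:ℤ)*2-(k:ℤ))
    have hc := risingZ_half_ne_zero ((k:ℤ))
    have hd := risingZ_one_ne_zero (m:ℤ) (by positivity)
    have he := risingZ_one_ne_zero (2+(m:ℤ)*2+(k:ℤ)*2) (by positivity)
    have h1 := half_add_int_ne (1+(m:ℤ)+(k:ℤ))
    have h2 := half_add_int_ne (2+((m:ℤ)*2-(k:ℤ)))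
    have h3 := half_add_int_ne (1+((m:ℤ)*2-(k:ℤ)))
    have h4 := half_add_int_ne ((k:ℤ))
    push_cast at *
    field_simp
    ring
end
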